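/- Let p be a prime, m, n ≥ 1, ρ > 0, and let s ∈ 𝔽_p^m be nonzero. Let H be a random m × n matrix with independent entries uniform on 𝔽_p, and let X be the number of x ∈ ℤⁿ with ‖x‖ ≤ ρ, x ∉ pℤⁿ, and Hx ≡ s (mod p). Then Var(X) ≤ (1 + (4ρ²/p²)·(8nρ²/p²)^{4ρ²/p²}) · E[X]. -/

import Mathlib

open Finset Matrix


private lemma fiber_card_eq' {G H : Type*} [AddCommGroup G] [Fintype G]
    [AddCommGroup H] [DecidableEq H] (f : G →+ H) (t₁ t₂ : H) (a₁ a₂ : G)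
    (h₁ : f a₁ = t₁) (h₂ : f a₂ = t₂) :
    (Finset.univ.filter fun x => f x = t₁).card
      = (Finset.univ.filter fun x => f x = t₂).card := by
  apply Finset.card_bij (fun x _ => x - a₁ + a₂)
  · intro a ha
    simp only [Finset.mem_filter, Finset.mem_univ, true_and] at ha ⊢
    simp [map_add, map_sub, ha, h₁, h₂]
  · intro a ha b hb hab
    have h' : a - a₁ = b - a₁ := add_right_cancel hab
    exact sub_left_injective h'
  · intro b hb
    simp only [Finset.mem_filter, Finset.mem_univ, true_and] at hb
    refine ⟨b - a₂ + a₁, ?_, by abel⟩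
    simp only [Finset.mem_filter, Finset.mem_univ, true_and]
    simp [map_add, map_sub, hb, h₁, h₂]

private lemma card_fiber_mul' {G H : Type*} [AddCommGroup G] [Fintype G]
    [AddCommGroup H] [Fintype H] [DecidableEq H] (f : G →+ H)
    (hf : Function.Surjective f) (t : H) :
    (Finset.univ.filter fun x => f x = t).card * Fintype.card H = Fintype.card G := by
  obtain ⟨a, ha⟩ := hf t
  have key : ∀ u : H, (Finset.univ.filter fun x => f x = u).card
      = (Finset.univ.filter fun x => f x = t).card := by
    intro u
    obtain ⟨b, hb⟩ := hf u
    exact fiber_card_eq' f u t b a hb ha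
  have h2 : Fintype.card G = ∑ u : H, (Finset.univ.filter fun x => f x = u).card := by
    rw [← Finset.card_univ]
    exact Finset.card_eq_sum_card_fiberwise (fun x _ => Finset.mem_univ (f x))
  rw [h2, Finset.sum_congr rfl fun u _ => key u, Finset.sum_const, Finset.card_univ,
    smul_eq_mul, mul_comm]


private lemma exists_dotProduct_eq' {K : Type*} [Field K] {n : ℕ} (v : Fin n → K)
    (hv : v ≠ 0) (t : K) : ∃ u : Fin n → K, u ⬝ᵥ v = t := by
  obtain ⟨j, hj⟩ : ∃ j, v j ≠ 0 := by
    by_contra h; push_neg at h; exact hv (funext h)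
  refine ⟨Pi.single j (t * (v j)⁻¹), ?_⟩
  rw [single_dotProduct]
  field_simp

private lemma exists_dotProduct_pair' {K : Type*} [Field K] {n : ℕ} {v w : Fin n → K}
    (h : LinearIndependent K ![v, w]) (a b : K) :
    ∃ u : Fin n → K, u ⬝ᵥ v = a ∧ u ⬝ᵥ w = b := by
  have hw : w ≠ 0 := by simpa using h.ne_zero 1
  have hvw : ∀ c : K, c • w ≠ v := by
    have := linearIndependent_fin2.mp h
    simpa using this.2
  obtain ⟨j, k, hd⟩ : ∃ j k, v j * w k - v k * w j ≠ 0 := by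
    by_contra hcon
    push_neg at hcon
    obtain ⟨k₀, hk₀⟩ : ∃ k, w k ≠ 0 := by
      by_contra hw0; push_neg at hw0; exact hw (funext hw0)
    apply hvw (v k₀ / w k₀)
    funext j
    have h2 : v j * w k₀ - v k₀ * w j = 0 := hcon j k₀
    simp only [Pi.smul_apply, smul_eq_mul]
    field_simp
    linear_combination -h2
  refine ⟨((a * w k - b * v k) / (v j * w k - v k * w j)) • (Pi.single j 1 : Fin n → K)
    + ((b * v j - a * w j) / (v j * w k - v k * w j)) • (Pi.single k 1 : Fin n → K), ?_, ?_⟩ <;>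
  · rw [add_dotProduct, smul_dotProduct, smul_dotProduct,
      single_dotProduct, single_dotProduct]
    simp only [smul_eq_mul, one_mul]
    rw [div_mul_eq_mul_div, div_mul_eq_mul_div, ← add_div, div_eq_iff hd]
    ring

private lemma card_matrix_fun {K : Type*} [Fintype K] {m n : ℕ} :
    Fintype.card (Matrix (Fin m) (Fin n) K) = Fintype.card K ^ (m * n) := by
  have : Fintype.card (Matrix (Fin m) (Fin n) K) = Fintype.card (Fin m → Fin n → K) := rfl
  rw [this]
  classical
  rw [Fintype.card_fun, Fintype.card_fun]
  simp [← pow_mul, Nat.mul_comm]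

private lemma card_matrix_fiber' {K : Type*} [Field K] [Fintype K] [DecidableEq K]
    {m n : ℕ} (v : Fin n → K) (hv : v ≠ 0) (s : Fin m → K) :
    (Finset.univ.filter fun H : Matrix (Fin m) (Fin n) K => H.mulVec v = s).card
        * Fintype.card K ^ m = Fintype.card K ^ (m * n) := by
  let f : Matrix (Fin m) (Fin n) K →+ (Fin m → K) :=
    { toFun := fun H => H.mulVec v
      map_zero' := by funext i; simp [Matrix.mulVec]
      map_add' := fun A B => by funext i; simp [Matrix.add_mulVec] }
  have hf : Function.Surjective f := by
    intro t
    choose u hu using fun i => exists_dotProduct_eq' v hv (t i)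
    exact ⟨Matrix.of u, funext hu⟩
  have h := card_fiber_mul' f hf s
  rwa [card_matrix_fun, Fintype.card_fun, Fintype.card_fin] at h

private lemma card_matrix_fiber_pair' {K : Type*} [Field K] [Fintype K] [DecidableEq K]
    {m n : ℕ} {v w : Fin n → K} (h : LinearIndependent K ![v, w]) (s t : Fin m → K) :
    (Finset.univ.filter fun H : Matrix (Fin m) (Fin n) K =>
        H.mulVec v = s ∧ H.mulVec w = t).card
        * (Fintype.card K ^ m * Fintype.card K ^ m) = Fintype.card K ^ (m * n) := by
  let f : Matrix (Fin m) (Fin n) K →+ (Fin m → K) × (Fin m → K) :=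
    { toFun := fun H => (H.mulVec v, H.mulVec w)
      map_zero' := by ext i <;> simp [Matrix.mulVec]
      map_add' := fun A B => by ext i <;> simp [Matrix.add_mulVec] }
  have hf : Function.Surjective f := by
    intro tt
    choose u hu1 hu2 using fun i => exists_dotProduct_pair' h (tt.1 i) (tt.2 i)
    exact ⟨Matrix.of u, Prod.ext (funext hu1) (funext hu2)⟩
  have hfil : (Finset.univ.filter fun H : Matrix (Fin m) (Fin n) K =>
      H.mulVec v = s ∧ H.mulVec w = t)
      = (Finset.univ.filter fun H => f H = (s, t)) := by
    apply Finset.filter_congr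
    intro H _
    simp [f, Prod.ext_iff]
  have hcard := card_fiber_mul' f hf (s, t)
  rw [hfil]
  rwa [card_matrix_fun, Fintype.card_prod, Fintype.card_fun, Fintype.card_fin] at hcard


private noncomputable def intBall (n : ℕ) (r : ℝ) : Finset (Fin n → ℤ) :=
  (Finset.Icc (fun _ => -⌈r⌉) (fun _ => ⌈r⌉)).filter
    fun z => Real.sqrt (∑ i, ((z i : ℝ)) ^ 2) ≤ r

private lemma sum_sq_le {n : ℕ} {r : ℝ} (hr : 0 ≤ r) {z : Fin n → ℤ}
    (hz : Real.sqrt (∑ i, ((z i : ℝ)) ^ 2) ≤ r) :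
    ∑ i, ((z i : ℝ)) ^ 2 ≤ r ^ 2 := by
  have h0 : (0:ℝ) ≤ ∑ i, ((z i : ℝ)) ^ 2 := Finset.sum_nonneg fun _ _ => sq_nonneg _
  calc ∑ i, ((z i : ℝ)) ^ 2 = (Real.sqrt (∑ i, ((z i : ℝ)) ^ 2)) ^ 2 :=
        (Real.sq_sqrt h0).symm
    _ ≤ r ^ 2 := pow_le_pow_left₀ (Real.sqrt_nonneg _) hz 2

private lemma coord_abs_le {n : ℕ} {r : ℝ} (hr : 0 ≤ r) {z : Fin n → ℤ}
    (hz : Real.sqrt (∑ i, ((z i : ℝ)) ^ 2) ≤ r) (i : Fin n) : |(z i : ℝ)| ≤ r := by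
  have h1 := sum_sq_le hr hz
  have h2 : ((z i : ℝ)) ^ 2 ≤ r ^ 2 :=
    le_trans (Finset.single_le_sum (fun j _ => sq_nonneg ((z j : ℝ))) (Finset.mem_univ i)) h1
  nlinarith [abs_nonneg (z i : ℝ), sq_abs ((z i : ℝ))]

private lemma mem_intBall {n : ℕ} {r : ℝ} (hr : 0 ≤ r) {z : Fin n → ℤ} :
    z ∈ intBall n r ↔ Real.sqrt (∑ i, ((z i : ℝ)) ^ 2) ≤ r := by
  constructor
  · intro hz; exact (Finset.mem_filter.mp hz).2
  · intro hz
    refine Finset.mem_filter.mpr ⟨Finset.mem_Icc.mpr ⟨fun i => ?_, fun i => ?_⟩, hz⟩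
    · have := coord_abs_le hr hz i
      have h1 : -r ≤ (z i : ℝ) := by nlinarith [abs_nonneg (z i : ℝ), le_abs_self (z i : ℝ), neg_abs_le (z i : ℝ)]
      have h2 : ((-⌈r⌉ : ℤ) : ℝ) ≤ (z i : ℝ) := by
        push_cast
        linarith [Int.le_ceil r]
      exact_mod_cast h2
    · have := coord_abs_le hr hz i
      have h1 : (z i : ℝ) ≤ r := le_trans (le_abs_self _) this
      have h2 : (z i : ℝ) ≤ ((⌈r⌉ : ℤ) : ℝ) := le_trans h1 (Int.le_ceil r)
      exact_mod_cast h2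

private lemma zero_mem_intBall {n : ℕ} {r : ℝ} (hr : 0 ≤ r) : (0 : Fin n → ℤ) ∈ intBall n r := by
  rw [mem_intBall hr]
  simp [Real.sqrt_zero, hr]

private lemma intBall_card_bound {n : ℕ} (hn : 1 ≤ n) {R : ℝ} (hR : 0 ≤ R) :
    (((intBall n R).erase 0).card : ℝ)
      ≤ R ^ 2 * (2 * n * R ^ 2) ^ ((R ^ 2 : ℝ) : ℝ) := by
  rcases lt_or_ge R 1 with hR1 | hR1
  · -- ball minus 0 is empty
    have hempty : (intBall n R).erase 0 = ∅ := by
      apply Finset.eq_empty_of_forall_notMem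
      intro z hz
      obtain ⟨hz0, hzB⟩ := Finset.mem_erase.mp hz
      rw [mem_intBall hR] at hzB
      obtain ⟨i, hi⟩ : ∃ i, z i ≠ 0 := by
        by_contra hcon; push_neg at hcon; exact hz0 (funext hcon)
      have h1 : (1 : ℝ) ≤ ((z i : ℝ)) ^ 2 := by
        have : (1 : ℤ) ≤ |z i| := Int.one_le_abs hi
        have h2 : (1 : ℝ) ≤ |(z i : ℝ)| := by exact_mod_cast this
        nlinarith [sq_abs ((z i : ℝ)), mul_self_nonneg (|(z i : ℝ)| - 1)]
      have h2 : (1 : ℝ) ≤ ∑ j, ((z j : ℝ)) ^ 2 :=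
        le_trans h1 (Finset.single_le_sum (fun j _ => sq_nonneg ((z j : ℝ))) (Finset.mem_univ i))
      have h3 : (1 : ℝ) ≤ Real.sqrt (∑ j, ((z j : ℝ)) ^ 2) := by
        rw [show (1:ℝ) = Real.sqrt 1 by simp]
        exact Real.sqrt_le_sqrt h2
      linarith
    rw [hempty]
    simp only [Finset.card_empty, Nat.cast_zero]
    positivity
  · -- main case R ≥ 1
    set F : ℕ := ⌊R⌋₊ with hF
    set Kn : ℕ := ⌊R ^ 2⌋₊ with hKn
    have hF1 : 1 ≤ F := Nat.one_le_iff_ne_zero.mpr (by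
      simp only [hF, ne_eq, Nat.floor_eq_zero, not_lt]
      exact hR1)
    have hKn1 : 1 ≤ Kn := Nat.one_le_iff_ne_zero.mpr (by
      simp only [hKn, ne_eq, Nat.floor_eq_zero, not_lt]
      nlinarith)
    -- fiberwise count by support
    set D : Finset ℤ := (Finset.Icc (-(F : ℤ)) (F : ℤ)).erase 0 with hD
    have hDcard : D.card = 2 * F := by
      rw [hD, Finset.card_erase_of_mem (by
        simp only [Finset.mem_Icc]
        omega)]
      rw [Int.card_Icc]
      omega
    classical
    set C : Finset (Fin n → ℤ) := (intBall n R).erase 0 with hC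
    set supp : (Fin n → ℤ) → Finset (Fin n) :=
      fun z => Finset.univ.filter (fun i => z i ≠ 0) with hsupp
    have hfib : C.card = ∑ T ∈ (Finset.univ : Finset (Fin n)).powerset,
        (C.filter (fun z => supp z = T)).card :=
      Finset.card_eq_sum_card_fiberwise fun z _ =>
        Finset.mem_powerset.mpr (Finset.subset_univ _)
    have hzfacts : ∀ z ∈ C, z ≠ 0 ∧ ∀ i, |(z i : ℝ)| ≤ R ∧ (-(F:ℤ) ≤ z i ∧ z i ≤ (F:ℤ)) := by
      intro z hz
      obtain ⟨hz0, hzB⟩ := Finset.mem_erase.mp hz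
      rw [mem_intBall hR] at hzB
      refine ⟨hz0, fun i => ⟨coord_abs_le hR hzB i, ?_, ?_⟩⟩
      · have h1 : ((-(z i) : ℤ) : ℝ) ≤ R := by
          push_cast
          have := coord_abs_le hR hzB i
          nlinarith [neg_abs_le (z i : ℝ)]
        have h2 : -(z i) ≤ ⌊R⌋ := Int.le_floor.mpr h1
        have h3 : ((F:ℕ) : ℤ) = ⌊R⌋ := Int.natCast_floor_eq_floor hR
        omega
      · have h1 : (z i : ℝ) ≤ R := le_trans (le_abs_self _) (coord_abs_le hR hzB i)
        have := Int.le_floor.mpr h1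
        rwa [← Int.natCast_floor_eq_floor hR] at this
    have hone_le : ∀ z ∈ C, ∀ i ∈ supp z, (1:ℝ) ≤ ((z i : ℝ))^2 := by
      intro z hz i hi
      have hi' : z i ≠ 0 := by
        simp only [hsupp, Finset.mem_filter] at hi
        exact hi.2
      have h1 : (1 : ℤ) ≤ |z i| := Int.one_le_abs hi'
      have h2 : (1 : ℝ) ≤ |(z i : ℝ)| := by exact_mod_cast h1
      nlinarith [sq_abs ((z i : ℝ)), mul_self_nonneg (|(z i : ℝ)| - 1)]
    have hsupp_card : ∀ z ∈ C, 1 ≤ (supp z).card ∧ (supp z).card ≤ Kn := by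
      intro z hz
      obtain ⟨hz0, hzB⟩ := Finset.mem_erase.mp hz
      rw [mem_intBall hR] at hzB
      constructor
      · obtain ⟨i, hi⟩ : ∃ i, z i ≠ 0 := by
          by_contra hcon; push_neg at hcon; exact hz0 (funext hcon)
        exact Finset.card_pos.mpr ⟨i, by simp [hsupp, hi]⟩
      · have h1 : ((supp z).card : ℝ) ≤ ∑ j, ((z j : ℝ))^2 := by
          calc ((supp z).card : ℝ) = ∑ j ∈ supp z, (1:ℝ) := by simp
            _ ≤ ∑ j ∈ supp z, ((z j : ℝ))^2 :=
                Finset.sum_le_sum (fun j hj => hone_le z hz j hj)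
            _ ≤ ∑ j, ((z j : ℝ))^2 :=
                Finset.sum_le_sum_of_subset_of_nonneg (Finset.subset_univ _)
                  (fun j _ _ => sq_nonneg _)
        have h2 : ((supp z).card : ℝ) ≤ R ^ 2 := le_trans h1 (sum_sq_le hR hzB)
        exact Nat.le_floor h2
    have hfibbound : ∀ T ∈ (Finset.univ : Finset (Fin n)).powerset,
        (C.filter (fun z => supp z = T)).card
          ≤ if 1 ≤ T.card ∧ T.card ≤ Kn then (2 * F) ^ T.card else 0 := by
      intro T _
      by_cases hT : 1 ≤ T.card ∧ T.card ≤ Kn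
      · rw [if_pos hT]
        have hinj : ∀ z₁ ∈ C.filter (fun z => supp z = T),
            ∀ z₂ ∈ C.filter (fun z => supp z = T),
            (fun i : {i // i ∈ T} => z₁ i.1) = (fun i : {i // i ∈ T} => z₂ i.1) → z₁ = z₂ := by
          intro z₁ h₁ z₂ h₂ heq
          obtain ⟨_, hs₁⟩ := Finset.mem_filter.mp h₁
          obtain ⟨_, hs₂⟩ := Finset.mem_filter.mp h₂
          funext i
          by_cases hi : i ∈ T
          · exact congrFun heq ⟨i, hi⟩
          · have e₁ : z₁ i = 0 := by
              by_contra hne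
              exact hi (hs₁ ▸ (by simp [hsupp, hne] : i ∈ supp z₁))
            have e₂ : z₂ i = 0 := by
              by_contra hne
              exact hi (hs₂ ▸ (by simp [hsupp, hne] : i ∈ supp z₂))
            rw [e₁, e₂]
        have hmaps : ∀ z ∈ C.filter (fun z => supp z = T),
            (fun i : {i // i ∈ T} => z i.1) ∈
              Fintype.piFinset (fun _ : {i // i ∈ T} => D) := by
          intro z hz
          obtain ⟨hzC, hzT⟩ := Finset.mem_filter.mp hz
          rw [Fintype.mem_piFinset]
          intro i
          have hbounds := (hzfacts z hzC).2 i.1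
          have hne : z i.1 ≠ 0 := by
            have : (i : Fin n) ∈ supp z := hzT ▸ i.2
            simpa [hsupp] using this
          rw [hD]
          refine Finset.mem_erase.mpr ⟨hne, Finset.mem_Icc.mpr ⟨hbounds.2.1, hbounds.2.2⟩⟩
        calc (C.filter (fun z => supp z = T)).card
            ≤ (Fintype.piFinset (fun _ : {i // i ∈ T} => D)).card :=
              Finset.card_le_card_of_injOn _ hmaps hinj
          _ = (2 * F) ^ T.card := by
              rw [Fintype.card_piFinset]
              simp [hDcard, Finset.prod_const]
      · rw [if_neg hT]
        rw [Nat.le_zero, Finset.card_eq_zero]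
        apply Finset.eq_empty_of_forall_notMem
        intro z hz
        obtain ⟨hzC, hzT⟩ := Finset.mem_filter.mp hz
        exact hT (hzT ▸ hsupp_card z hzC)
    -- collect
    set A : Finset (Finset (Fin n)) :=
      (Finset.univ : Finset (Fin n)).powerset.filter (fun T => 1 ≤ T.card ∧ T.card ≤ Kn) with hA
    have hnat : C.card ≤ A.card * (2 * F) ^ Kn := by
      calc C.card = ∑ T ∈ (Finset.univ : Finset (Fin n)).powerset,
            (C.filter (fun z => supp z = T)).card := hfib
        _ ≤ ∑ T ∈ (Finset.univ : Finset (Fin n)).powerset,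
            (if 1 ≤ T.card ∧ T.card ≤ Kn then (2 * F) ^ T.card else 0) :=
            Finset.sum_le_sum hfibbound
        _ = ∑ T ∈ A, (2 * F) ^ T.card := (Finset.sum_filter _ _).symm
        _ ≤ ∑ T ∈ A, (2 * F) ^ Kn := Finset.sum_le_sum (fun T hT => by
            have := (Finset.mem_filter.mp hT).2
            exact Nat.pow_le_pow_right (by omega) this.2)
        _ = A.card * (2 * F) ^ Kn := by rw [Finset.sum_const, smul_eq_mul]
    have hAcard : A.card ≤ Kn * n ^ Kn := by
      have hsub : A ⊆ (Finset.Icc 1 Kn).biUnion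
          (fun k => Finset.powersetCard k (Finset.univ : Finset (Fin n))) := by
        intro T hT
        obtain ⟨_, hT2⟩ := Finset.mem_filter.mp hT
        refine Finset.mem_biUnion.mpr ⟨T.card, Finset.mem_Icc.mpr hT2, ?_⟩
        exact Finset.mem_powersetCard.mpr ⟨Finset.subset_univ _, rfl⟩
      calc A.card ≤ ((Finset.Icc 1 Kn).biUnion
            (fun k => Finset.powersetCard k (Finset.univ : Finset (Fin n)))).card :=
            Finset.card_le_card hsub
        _ ≤ ∑ k ∈ Finset.Icc 1 Kn,
            (Finset.powersetCard k (Finset.univ : Finset (Fin n))).card :=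
            Finset.card_biUnion_le
        _ ≤ ∑ k ∈ Finset.Icc 1 Kn, n ^ Kn := Finset.sum_le_sum (fun k hk => by
            rw [Finset.card_powersetCard, Finset.card_univ, Fintype.card_fin]
            exact le_trans (Nat.choose_le_pow n k)
              (Nat.pow_le_pow_right hn (Finset.mem_Icc.mp hk).2))
        _ = Kn * n ^ Kn := by rw [Finset.sum_const, Nat.card_Icc]; simp [smul_eq_mul]
    -- to the reals
    have hreal : (C.card : ℝ) ≤ (Kn : ℝ) * ((n : ℝ) ^ Kn * ((2 * F : ℕ) : ℝ) ^ Kn) := by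
      have := le_trans hnat (Nat.mul_le_mul_right _ hAcard)
      calc (C.card : ℝ) ≤ ((Kn * n ^ Kn * (2 * F) ^ Kn : ℕ) : ℝ) := by exact_mod_cast this
        _ = (Kn : ℝ) * ((n : ℝ) ^ Kn * ((2 * F : ℕ) : ℝ) ^ Kn) := by push_cast; ring
    have hKR : (Kn : ℝ) ≤ R ^ 2 := Nat.floor_le (by positivity)
    have hFR : ((F : ℕ) : ℝ) ≤ R := Nat.floor_le hR
    have hbase : (n : ℝ) ^ Kn * ((2 * F : ℕ) : ℝ) ^ Kn ≤ (2 * n * R ^ 2) ^ Kn := by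
      rw [← mul_pow]
      apply pow_le_pow_left₀ (by positivity)
      have hn1 : (1 : ℝ) ≤ (n : ℝ) := by exact_mod_cast hn
      have hRR : R ≤ R ^ 2 := by nlinarith
      push_cast
      nlinarith [hFR, hRR, hn1, hR]
    have hrpow : ((2 * n * R ^ 2) ^ Kn : ℝ) ≤ (2 * n * R ^ 2) ^ ((R ^ 2 : ℝ) : ℝ) := by
      rw [← Real.rpow_natCast (2 * n * R ^ 2) Kn]
      apply Real.rpow_le_rpow_of_exponent_le
      · have hn1 : (1 : ℝ) ≤ (n : ℝ) := by exact_mod_cast hn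
        nlinarith
      · exact hKR
    calc (C.card : ℝ) ≤ (Kn : ℝ) * ((n : ℝ) ^ Kn * ((2 * F : ℕ) : ℝ) ^ Kn) := hreal
      _ ≤ R ^ 2 * (2 * n * R ^ 2) ^ ((R ^ 2 : ℝ) : ℝ) := by
          apply mul_le_mul hKR (le_trans hbase hrpow) (by positivity) (by positivity)

private lemma sqrt_sum_sub_le {n : ℕ} {ρ : ℝ} (x y : Fin n → ℤ)
    (hx : Real.sqrt (∑ i, ((x i : ℝ))^2) ≤ ρ) (hy : Real.sqrt (∑ i, ((y i : ℝ))^2) ≤ ρ) :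
    Real.sqrt (∑ i, ((y i : ℝ) - (x i : ℝ))^2) ≤ 2 * ρ := by
  let fx : EuclideanSpace ℝ (Fin n) := WithLp.toLp 2 (fun i => (x i : ℝ))
  let fy : EuclideanSpace ℝ (Fin n) := WithLp.toLp 2 (fun i => (y i : ℝ))
  have hnorm : ∀ v : EuclideanSpace ℝ (Fin n), ‖v‖ = Real.sqrt (∑ i, (v i)^2) := by
    intro v
    rw [EuclideanSpace.norm_eq]
    congr 1
    exact Finset.sum_congr rfl fun i _ => by rw [Real.norm_eq_abs, sq_abs]
  have h1 : Real.sqrt (∑ i, ((y i : ℝ) - (x i : ℝ))^2) = ‖fy - fx‖ := by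
    rw [hnorm]
    congr 1
  rw [h1]
  calc ‖fy - fx‖ ≤ ‖fy‖ + ‖fx‖ := norm_sub_le _ _
    _ ≤ ρ + ρ := by
        rw [hnorm, hnorm]
        exact add_le_add hy hx
    _ = 2 * ρ := by ring

private lemma congr_fiber_card {p n : ℕ} (hp : 0 < p) {ρ : ℝ} (hρ : 0 ≤ ρ)
    (S : Finset (Fin n → ℤ)) (hS : ∀ y ∈ S, Real.sqrt (∑ i, ((y i : ℝ))^2) ≤ ρ)
    (x : Fin n → ℤ) (hx : Real.sqrt (∑ i, ((x i : ℝ))^2) ≤ ρ) :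
    (S.filter fun y => (fun j => ((y j : ℤ) : ZMod p)) = (fun j => ((x j : ℤ) : ZMod p))).card
      ≤ (intBall n (2 * ρ / p)).card := by
  have hp' : (0:ℝ) < p := by exact_mod_cast hp
  apply Finset.card_le_card_of_injOn (fun y => fun i => (y i - x i) / p)
  · intro y hy
    obtain ⟨hyS, hyc⟩ := Finset.mem_filter.mp hy
    have hdvd : ∀ i, (p : ℤ) ∣ (y i - x i) := by
      intro i
      have h1 : ((y i : ℤ) : ZMod p) = ((x i : ℤ) : ZMod p) := congrFun hyc i
      have h2 := (ZMod.intCast_eq_intCast_iff _ _ _).mp h1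
      exact Int.ModEq.dvd h2.symm
    have hmul : ∀ i, (p : ℤ) * ((y i - x i) / p) = y i - x i :=
      fun i => Int.mul_ediv_cancel' (hdvd i)
    simp only [Finset.mem_coe]
    rw [mem_intBall (by positivity)]
    have hcast : ∀ i, (((y i - x i) / p : ℤ) : ℝ) = ((y i : ℝ) - (x i : ℝ)) / p := by
      intro i
      have := hmul i
      have h3 : (p:ℝ) * (((y i - x i) / p : ℤ) : ℝ) = (y i : ℝ) - (x i : ℝ) := by
        exact_mod_cast congrArg (fun t : ℤ => (t : ℝ)) this
      field_simp at h3 ⊢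
      linarith
    have hsum : ∑ i, ((((y i - x i) / p : ℤ) : ℝ))^2
        = (∑ i, ((y i : ℝ) - (x i : ℝ))^2) / (p:ℝ)^2 := by
      rw [Finset.sum_div]
      exact Finset.sum_congr rfl fun i _ => by rw [hcast]; ring
    rw [hsum]
    have htri := sqrt_sum_sub_le x y hx (hS y hyS)
    have hsq : Real.sqrt ((∑ i, ((y i : ℝ) - (x i : ℝ))^2) / (p:ℝ)^2)
        = Real.sqrt (∑ i, ((y i : ℝ) - (x i : ℝ))^2) / p := by
      rw [Real.sqrt_div (Finset.sum_nonneg fun i _ => sq_nonneg _),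
        Real.sqrt_sq hp'.le]
    rw [hsq]
    exact (div_le_div_iff_of_pos_right hp').mpr htri
  · intro y₁ h₁ y₂ h₂ heq
    have hdvd : ∀ y ∈ S.filter (fun y =>
        (fun j => ((y j : ℤ) : ZMod p)) = (fun j => ((x j : ℤ) : ZMod p))),
        ∀ i, (p : ℤ) ∣ (y i - x i) := by
      intro y hy i
      obtain ⟨hyS, hyc⟩ := Finset.mem_filter.mp hy
      have h1 : ((y i : ℤ) : ZMod p) = ((x i : ℤ) : ZMod p) := congrFun hyc i
      exact Int.ModEq.dvd ((ZMod.intCast_eq_intCast_iff _ _ _).mp h1).symm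
    funext i
    have e1 : (p:ℤ) * ((y₁ i - x i) / p) = y₁ i - x i := Int.mul_ediv_cancel' (hdvd y₁ h₁ i)
    have e2 : (p:ℤ) * ((y₂ i - x i) / p) = y₂ i - x i := Int.mul_ediv_cancel' (hdvd y₂ h₂ i)
    have e3 : (y₁ i - x i) / p = (y₂ i - x i) / p := congrFun heq i
    rw [e3] at e1
    omega


set_option maxHeartbeats 2000000 in
theorem variance_of_solution_count (p m n : ℕ) (hp : p.Prime) (hm : 1 ≤ m) (hn : 1 ≤ n)
    (ρ : ℝ) (hρ : 0 < ρ) (s : Fin m → ZMod p) (hs : s ≠ 0) :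
    letI : NeZero p := ⟨hp.ne_zero⟩
    let X : Matrix (Fin m) (Fin n) (ZMod p) → ℕ := fun H =>
      Set.ncard {x : Fin n → ℤ |
        Real.sqrt (∑ i, ((x i : ℝ)) ^ 2) ≤ ρ ∧
        ¬(∀ i, (p : ℤ) ∣ x i) ∧
        H.mulVec (fun j => ((x j : ℤ) : ZMod p)) = s}
    let E : ℝ := (∑ H : Matrix (Fin m) (Fin n) (ZMod p), (X H : ℝ)) / (p : ℝ) ^ (m * n)
    (∑ H : Matrix (Fin m) (Fin n) (ZMod p), ((X H : ℝ) - E) ^ 2) / (p : ℝ) ^ (m * n)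
      ≤ (1 + (4 * ρ ^ 2 / (p : ℝ) ^ 2) *
          (8 * n * ρ ^ 2 / (p : ℝ) ^ 2) ^ ((4 * ρ ^ 2 / (p : ℝ) ^ 2) : ℝ)) * E := by
  letI : NeZero p := ⟨hp.ne_zero⟩
  haveI : Fact p.Prime := ⟨hp⟩
  intro X E
  have hρ0 : (0:ℝ) ≤ ρ := hρ.le
  have hp0 : 0 < p := hp.pos
  have hpR : (0:ℝ) < p := by exact_mod_cast hp0
  set N : ℝ := (p:ℝ) ^ (m*n) with hNdef
  have hN0 : (0:ℝ) < N := by positivity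
  set q : ℝ := (p:ℝ) ^ m with hqdef
  have hq0 : (0:ℝ) < q := by positivity
  set c : ℝ := N / q with hcdef
  set c2 : ℝ := N / q^2 with hc2def
  have hc0 : (0:ℝ) ≤ c := by positivity
  have hc20 : (0:ℝ) ≤ c2 := by positivity
  set red : (Fin n → ℤ) → (Fin n → ZMod p) := fun x j => ((x j : ℤ) : ZMod p) with hreddef
  set S : Finset (Fin n → ℤ) := (intBall n ρ).filter (fun x => ¬∀ i, (p:ℤ) ∣ x i) with hSdef
  set F : Matrix (Fin m) (Fin n) (ZMod p) → Finset (Fin n → ℤ) :=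
    fun H => S.filter (fun x => H.mulVec (red x) = s) with hFdef
  -- X H is the cardinality of F H
  have hX : ∀ H, X H = (F H).card := by
    intro H
    have hset : {x : Fin n → ℤ |
        Real.sqrt (∑ i, ((x i : ℝ)) ^ 2) ≤ ρ ∧
        ¬(∀ i, (p : ℤ) ∣ x i) ∧
        H.mulVec (fun j => ((x j : ℤ) : ZMod p)) = s} = ↑(F H) := by
      ext x
      constructor
      · rintro ⟨h1, h2, h3⟩
        exact Finset.mem_coe.mpr (Finset.mem_filter.mpr
          ⟨Finset.mem_filter.mpr ⟨(mem_intBall hρ0).mpr h1, h2⟩, h3⟩)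
      · intro hx
        obtain ⟨hx1, hx3⟩ := Finset.mem_filter.mp (Finset.mem_coe.mp hx)
        obtain ⟨hx0, hx2⟩ := Finset.mem_filter.mp hx1
        exact ⟨(mem_intBall hρ0).mp hx0, hx2, hx3⟩
    calc X H = Set.ncard {x : Fin n → ℤ |
        Real.sqrt (∑ i, ((x i : ℝ)) ^ 2) ≤ ρ ∧
        ¬(∀ i, (p : ℤ) ∣ x i) ∧
        H.mulVec (fun j => ((x j : ℤ) : ZMod p)) = s} := rfl
      _ = (F H).card := by rw [hset, Set.ncard_coe_finset]
  have hXR : ∀ H, (X H : ℝ) = ((F H).card : ℝ) := fun H => by rw [hX H]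
  have hSball : ∀ y ∈ S, Real.sqrt (∑ i, ((y i : ℝ))^2) ≤ ρ := by
    intro y hy
    exact (mem_intBall hρ0).mp (Finset.mem_filter.mp hy).1
  have hred0 : ∀ x ∈ S, red x ≠ 0 := by
    intro x hx hcon
    obtain ⟨_, h2⟩ := Finset.mem_filter.mp hx
    apply h2
    intro i
    have : ((x i : ℤ) : ZMod p) = 0 := congrFun hcon i
    exact (ZMod.intCast_zmod_eq_zero_iff_dvd _ _).mp this
  -- counting matrices: single condition
  have hcard1 : ∀ x ∈ S, ((Finset.univ.filter
      fun H : Matrix (Fin m) (Fin n) (ZMod p) => H.mulVec (red x) = s).card : ℝ) = c := by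
    intro x hx
    have h := card_matrix_fiber' (red x) (hred0 x hx) s
    rw [ZMod.card] at h
    rw [hcdef, eq_div_iff hq0.ne', hqdef, hNdef]
    exact_mod_cast h
  -- counting matrices: independent pair
  have hcard2 : ∀ x y : Fin n → ℤ, LinearIndependent (ZMod p) ![red x, red y] →
      ((Finset.univ.filter fun H : Matrix (Fin m) (Fin n) (ZMod p) =>
        H.mulVec (red x) = s ∧ H.mulVec (red y) = s).card : ℝ) = c2 := by
    intro x y hli
    have h := card_matrix_fiber_pair' hli s s
    rw [ZMod.card] at h
    rw [hc2def, eq_div_iff (by positivity : (q:ℝ)^2 ≠ 0), hqdef, hNdef]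
    have : ((p:ℝ)^m)^2 = (p:ℝ)^m * (p:ℝ)^m := by ring
    rw [this]
    exact_mod_cast h
  -- first moment
  have hXsum : ∑ H : Matrix (Fin m) (Fin n) (ZMod p), (X H : ℝ) = S.card * c := by
    calc ∑ H : Matrix (Fin m) (Fin n) (ZMod p), (X H : ℝ)
        = ∑ H : Matrix (Fin m) (Fin n) (ZMod p), ∑ x ∈ S,
            (if H.mulVec (red x) = s then (1:ℝ) else 0) := by
          refine Finset.sum_congr rfl fun H _ => ?_
          rw [hXR H, hFdef, Finset.sum_boole]
      _ = ∑ x ∈ S, ∑ H : Matrix (Fin m) (Fin n) (ZMod p),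
            (if H.mulVec (red x) = s then (1:ℝ) else 0) := Finset.sum_comm
      _ = ∑ x ∈ S, ((Finset.univ.filter
            fun H : Matrix (Fin m) (Fin n) (ZMod p) => H.mulVec (red x) = s).card : ℝ) := by
          refine Finset.sum_congr rfl fun x _ => ?_
          rw [Finset.sum_boole]
      _ = ∑ x ∈ S, c := Finset.sum_congr rfl hcard1
      _ = S.card * c := by rw [Finset.sum_const, nsmul_eq_mul]
  -- second moment
  set cp : (Fin n → ℤ) → (Fin n → ℤ) → ℝ := fun x y => ((Finset.univ.filter
      fun H : Matrix (Fin m) (Fin n) (ZMod p) =>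
        H.mulVec (red x) = s ∧ H.mulVec (red y) = s).card : ℝ) with hcpdef
  have hXsq : ∑ H : Matrix (Fin m) (Fin n) (ZMod p), (X H : ℝ)^2
      = ∑ x ∈ S, ∑ y ∈ S, cp x y := by
    calc ∑ H : Matrix (Fin m) (Fin n) (ZMod p), (X H : ℝ)^2
        = ∑ H : Matrix (Fin m) (Fin n) (ZMod p), ∑ x ∈ S, ∑ y ∈ S,
            (if H.mulVec (red x) = s ∧ H.mulVec (red y) = s then (1:ℝ) else 0) := by
          refine Finset.sum_congr rfl fun H _ => ?_
          rw [hXR H, sq, hFdef]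
          rw [show (((S.filter (fun x => H.mulVec (red x) = s)).card : ℝ))
              = ∑ x ∈ S, (if H.mulVec (red x) = s then (1:ℝ) else 0) from
            (Finset.sum_boole _ _).symm]
          rw [Finset.sum_mul_sum]
          refine Finset.sum_congr rfl fun x _ => Finset.sum_congr rfl fun y _ => ?_
          by_cases h1 : H.mulVec (red x) = s <;> by_cases h2 : H.mulVec (red y) = s <;>
            simp [h1, h2]
      _ = ∑ x ∈ S, ∑ y ∈ S, ∑ H : Matrix (Fin m) (Fin n) (ZMod p),
            (if H.mulVec (red x) = s ∧ H.mulVec (red y) = s then (1:ℝ) else 0) := by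
          rw [Finset.sum_comm]
          exact Finset.sum_congr rfl fun x _ => Finset.sum_comm
      _ = ∑ x ∈ S, ∑ y ∈ S, cp x y := by
          refine Finset.sum_congr rfl fun x _ => Finset.sum_congr rfl fun y _ => ?_
          rw [Finset.sum_boole, hcpdef]
  -- cardinality of matrix space
  have hcardM : ((Finset.univ : Finset (Matrix (Fin m) (Fin n) (ZMod p))).card : ℝ) = N := by
    rw [Finset.card_univ, card_matrix_fun, ZMod.card, hNdef]
    push_cast
    ring
  -- variance identity
  have hvar : ∑ H : Matrix (Fin m) (Fin n) (ZMod p), ((X H : ℝ) - E)^2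
      = (∑ H : Matrix (Fin m) (Fin n) (ZMod p), (X H : ℝ)^2)
        - (∑ H : Matrix (Fin m) (Fin n) (ZMod p), (X H : ℝ))^2 / N := by
    have hE : E * N = ∑ H : Matrix (Fin m) (Fin n) (ZMod p), (X H : ℝ) := by
      rw [show E = (∑ H : Matrix (Fin m) (Fin n) (ZMod p), (X H : ℝ))/N from rfl]
      field_simp
    have expand : ∀ H ∈ (Finset.univ : Finset (Matrix (Fin m) (Fin n) (ZMod p))),
        ((X H : ℝ) - E)^2 = ((X H : ℝ)^2 - 2*E*(X H : ℝ)) + E^2 := fun H _ => by ring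
    rw [Finset.sum_congr rfl expand, Finset.sum_add_distrib, Finset.sum_sub_distrib,
      Finset.sum_const, nsmul_eq_mul, ← Finset.mul_sum, hcardM, ← hE]
    field_simp
    ring
  -- key rewriting of the variance
  have hkey : (∑ H : Matrix (Fin m) (Fin n) (ZMod p), (X H : ℝ)^2)
      - (∑ H : Matrix (Fin m) (Fin n) (ZMod p), (X H : ℝ))^2 / N
      = ∑ x ∈ S, ∑ y ∈ S, (cp x y - c2) := by
    rw [hXsq, hXsum]
    have h1 : ((S.card : ℝ) * c)^2 / N = (S.card : ℝ)^2 * c2 := by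
      rw [hcdef, hc2def]
      field_simp
    rw [h1]
    have h2 : ∀ x ∈ S, ∑ y ∈ S, (cp x y - c2) = (∑ y ∈ S, cp x y) - (S.card : ℝ) * c2 :=
      fun x _ => by rw [Finset.sum_sub_distrib, Finset.sum_const, nsmul_eq_mul]
    rw [Finset.sum_congr rfl h2, Finset.sum_sub_distrib, Finset.sum_const, nsmul_eq_mul]
    ring
  -- termwise bound
  have hterm : ∀ x ∈ S, ∀ y ∈ S, cp x y - c2 ≤ if red y = red x then c else 0 := by
    intro x hx y hy
    by_cases heq : red y = red x
    · rw [if_pos heq]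
      have hfil : (Finset.univ.filter fun H : Matrix (Fin m) (Fin n) (ZMod p) =>
          H.mulVec (red x) = s ∧ H.mulVec (red y) = s)
          = (Finset.univ.filter fun H : Matrix (Fin m) (Fin n) (ZMod p) =>
            H.mulVec (red x) = s) := by
        apply Finset.filter_congr
        intro H _
        rw [heq]
        simp
      have : cp x y = c := by rw [hcpdef]; dsimp only; rw [hfil]; exact hcard1 x hx
      rw [this]
      linarith
    · rw [if_neg heq]
      by_cases hli : LinearIndependent (ZMod p) ![red x, red y]
      · have : cp x y = c2 := hcard2 x y hli
        linarith
      · -- dependent: red x is a multiple of red y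
        obtain ⟨a, ha⟩ : ∃ a : ZMod p, a • red y = red x := by
          by_contra hcon
          push_neg at hcon
          apply hli
          rw [linearIndependent_fin2]
          constructor
          · simpa using hred0 y hy
          · simpa using hcon
        have hfil0 : (Finset.univ.filter fun H : Matrix (Fin m) (Fin n) (ZMod p) =>
            H.mulVec (red x) = s ∧ H.mulVec (red y) = s) = ∅ := by
          apply Finset.eq_empty_of_forall_notMem
          intro H hH
          obtain ⟨hH1, hH2⟩ := (Finset.mem_filter.mp hH).2
          have h3 : a • s = s := by
            calc a • s = a • (H *ᵥ red y) := by rw [hH2]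
              _ = H *ᵥ (a • red y) := (Matrix.mulVec_smul _ _ _).symm
              _ = H *ᵥ red x := by rw [ha]
              _ = s := hH1
          have h4 : a = 1 := by
            by_contra hne
            have h5 : (a - 1) • s = 0 := by rw [sub_smul, one_smul, h3, sub_self]
            rcases smul_eq_zero.mp h5 with h | h
            · exact hne (by rwa [sub_eq_zero] at h)
            · exact hs h
          rw [h4, one_smul] at ha
          exact heq ha
        have : cp x y = 0 := by rw [hcpdef]; dsimp only; rw [hfil0]; simp
        linarith
  -- the geometric bound
  set R : ℝ := 2 * ρ / p with hRdef
  have hR0 : (0:ℝ) ≤ R := by positivity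
  set β : ℝ := R^2 * (2 * n * R^2) ^ ((R^2 : ℝ) : ℝ) with hβdef
  have hβ0 : (0:ℝ) ≤ β := by
    rw [hβdef]
    have : (0:ℝ) ≤ 2 * n * R^2 := by positivity
    positivity
  have hfc : ∀ x ∈ S, ((S.filter fun y => red y = red x).card : ℝ) ≤ 1 + β := by
    intro x hx
    have h1 := congr_fiber_card hp0 hρ0 S hSball x (hSball x hx)
    have h2 : ((intBall n (2 * ρ / p)).erase 0).card + 1 = (intBall n (2 * ρ / p)).card :=
      Finset.card_erase_add_one (zero_mem_intBall (by positivity))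
    have h3 := intBall_card_bound hn hR0
    have h4 : (S.filter fun y => red y = red x).card ≤ (intBall n (2 * ρ / p)).card := h1
    rw [← h2] at h4
    have h5 : ((S.filter fun y => red y = red x).card : ℝ)
        ≤ (((intBall n (2 * ρ / p)).erase 0).card : ℝ) + 1 := by exact_mod_cast h4
    have h6 : (((intBall n (2 * ρ / p)).erase 0).card : ℝ) ≤ β := by
      rw [hβdef, hRdef]
      exact h3
    linarith
  -- putting everything together
  have hmain : ∑ H : Matrix (Fin m) (Fin n) (ZMod p), ((X H : ℝ) - E)^2
      ≤ (1 + β) * ((S.card : ℝ) * c) := by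
    rw [hvar, hkey]
    calc ∑ x ∈ S, ∑ y ∈ S, (cp x y - c2)
        ≤ ∑ x ∈ S, (c * ((S.filter fun y => red y = red x).card : ℝ)) := by
          refine Finset.sum_le_sum fun x hx => ?_
          calc ∑ y ∈ S, (cp x y - c2)
              ≤ ∑ y ∈ S, (if red y = red x then c else 0) :=
                Finset.sum_le_sum (hterm x hx)
            _ = ∑ y ∈ S.filter (fun y => red y = red x), c := (Finset.sum_filter _ _).symm
            _ = c * ((S.filter fun y => red y = red x).card : ℝ) := by
                rw [Finset.sum_const, nsmul_eq_mul]
                ring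
      _ ≤ ∑ x ∈ S, c * (1 + β) := Finset.sum_le_sum fun x hx =>
          mul_le_mul_of_nonneg_left (hfc x hx) hc0
      _ = (S.card : ℝ) * (c * (1 + β)) := by rw [Finset.sum_const, nsmul_eq_mul]
      _ = (1 + β) * ((S.card : ℝ) * c) := by ring
  -- conclude
  have hE2 : E = (S.card : ℝ) * c / N := by
    rw [show E = (∑ H : Matrix (Fin m) (Fin n) (ZMod p), (X H : ℝ))/N from rfl, hXsum]
  have e1 : 4 * ρ ^ 2 / (p : ℝ) ^ 2 = R^2 := by
    rw [hRdef]
    field_simp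
    ring
  have e2 : 8 * (n : ℝ) * ρ ^ 2 / (p : ℝ) ^ 2 = 2 * n * R^2 := by
    rw [hRdef]
    field_simp
    ring
  rw [e1, e2, ← hβdef]
  calc (∑ H : Matrix (Fin m) (Fin n) (ZMod p), ((X H : ℝ) - E)^2) / N
      ≤ ((1 + β) * ((S.card : ℝ) * c)) / N := (div_le_div_iff_of_pos_right hN0).mpr hmain
    _ = (1 + β) * E := by rw [hE2]; ring
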